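/- There exists a 2-connected planar graph G and a longest path P of G such that ecc_G(P) > pe(G); that is, 2-connected planar graphs do not in general satisfy the property that every longest path is a central path. -/

import Mathlib

open SimpleGraph

variable {V : Type*} [Fintype V] [DecidableEq V]

/-- Distance from a vertex `u` to the vertex set of a walk `P`. -/
noncomputable def walkDist (G : SimpleGraph V) {a b : V} (P : G.Walk a b) (u : V) : ℕ :=
  P.support.toFinset.inf' ⟨a, List.mem_toFinset.mpr P.start_mem_support⟩ (fun x => G.dist u x)

/-- Eccentricity of a walk: max distance from any vertex of `G` to the walk. -/
noncomputable def eccW (G : SimpleGraph V) {a b : V} (P : G.Walk a b) : ℕ :=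
  Finset.univ.sup (walkDist G P)

/-- Path eccentricity of a graph. -/
noncomputable def pe (G : SimpleGraph V) : ℕ :=
  sInf {m | ∃ (a b : V) (P : G.Walk a b), P.IsPath ∧ eccW G P = m}

/-- `P` is a longest path in `G`. -/
def IsLongestPath (G : SimpleGraph V) {a b : V} (P : G.Walk a b) : Prop :=
  P.IsPath ∧ ∀ (c d : V) (Q : G.Walk c d), Q.IsPath → Q.length ≤ P.length

/-- `G` is `k`-connected. -/
def KConnected (k : ℕ) (G : SimpleGraph V) : Prop :=
  k + 1 ≤ Fintype.card V ∧
    ∀ S : Finset V, S.card < k → (G.induce ((↑S : Set V)ᶜ)).Connected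

/-- `H` is a minor of `G`: there are pairwise disjoint connected branch sets in `G`,
one for each vertex of `H`, with an edge of `G` between the branch sets of any two
adjacent vertices of `H`. -/
def IsMinorOf {W U : Type*} (H : SimpleGraph W) (G : SimpleGraph U) : Prop :=
  ∃ f : W → Set U,
    (∀ w, (f w).Nonempty) ∧
    (∀ w, (G.induce (f w)).Connected) ∧
    (Pairwise (Function.onFun Disjoint f)) ∧
    ∀ ⦃a b : W⦄, H.Adj a b → ∃ u ∈ f a, ∃ v ∈ f b, G.Adj u v

/-- Planarity via Wagner's theorem: a graph is planar iff it has neither a `K₅`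
nor a `K_{3,3}` minor. -/
def IsPlanar {U : Type*} (G : SimpleGraph U) : Prop :=
  ¬ IsMinorOf (completeGraph (Fin 5)) G ∧
  ¬ IsMinorOf (completeBipartiteGraph (Fin 3) (Fin 3)) G



section General

variable {V : Type*} [Fintype V] [DecidableEq V]

/-- Connectivity of an induced subgraph via a rank function decreasing to a hub. -/
lemma connected_induce_of_rho (G : SimpleGraph V) (s : Set V) (hub : V) (hhub : hub ∈ s)
    (ρ : V → ℕ)
    (h : ∀ v, v ∈ s → v ≠ hub → ∃ u, u ∈ s ∧ G.Adj v u ∧ ρ u < ρ v) :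
    (G.induce s).Connected := by
  rw [connected_iff_exists_forall_reachable]
  refine ⟨⟨hub, hhub⟩, fun w => ?_⟩
  suffices H : ∀ n (v : V) (hv : v ∈ s), ρ v ≤ n →
      (G.induce s).Reachable ⟨v, hv⟩ ⟨hub, hhub⟩ by
    obtain ⟨v, hv⟩ := w
    exact (H (ρ v) v hv le_rfl).symm
  intro n
  induction n with
  | zero =>
    intro v hv hρ
    by_cases hvh : v = hub
    · subst hvh; exact Reachable.refl _
    · obtain ⟨u, hu, hadj, hlt⟩ := h v hv hvh
      omega
  | succ n ih =>
    intro v hv hρ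
    by_cases hvh : v = hub
    · subst hvh; exact Reachable.refl _
    · obtain ⟨u, hu, hadj, hlt⟩ := h v hv hvh
      have hA : (G.induce s).Adj ⟨v, hv⟩ ⟨u, hu⟩ := hadj
      exact hA.reachable.trans (ih u hu (by omega))

lemma connected_of_rho (G : SimpleGraph V) (hub : V) (ρ : V → ℕ)
    (h : ∀ v, v ≠ hub → ∃ u, G.Adj v u ∧ ρ u < ρ v) :
    G.Connected := by
  rw [connected_iff_exists_forall_reachable]
  refine ⟨hub, fun w => ?_⟩
  suffices H : ∀ n (v : V), ρ v ≤ n → G.Reachable v hub by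
    exact (H (ρ w) w le_rfl).symm
  intro n
  induction n with
  | zero =>
    intro v hρ
    by_cases hvh : v = hub
    · subst hvh; exact Reachable.refl _
    · obtain ⟨u, hadj, hlt⟩ := h v hvh; omega
  | succ n ih =>
    intro v hρ
    by_cases hvh : v = hub
    · subst hvh; exact Reachable.refl _
    · obtain ⟨u, hadj, hlt⟩ := h v hvh
      exact hadj.reachable.trans (ih u (by omega))

lemma walk_in_set {G : SimpleGraph V} {B : Set V} (hc : (G.induce B).Connected)
    {a b : V} (ha : a ∈ B) (hb : b ∈ B) :
    ∃ w : G.Walk a b, ∀ x ∈ w.support, x ∈ B := by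
  obtain ⟨W⟩ := hc.preconnected ⟨a, ha⟩ ⟨b, hb⟩
  refine ⟨W.map (SimpleGraph.Embedding.induce B).toHom, fun x hx => ?_⟩
  replace hx : x ∈ (W.map (SimpleGraph.Embedding.induce B).toHom).support := hx
  rw [SimpleGraph.Walk.support_map] at hx
  obtain ⟨y, -, rfl⟩ := List.mem_map.mp hx
  exact y.2

lemma cycle_of_sets {G : SimpleGraph V} {B0 B1 B2 B3 : Set V}
    (d01 : Disjoint B0 B1) (d02 : Disjoint B0 B2) (d03 : Disjoint B0 B3)
    (d12 : Disjoint B1 B2) (d13 : Disjoint B1 B3) (d23 : Disjoint B2 B3)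
    (c0 : (G.induce B0).Connected) (c1 : (G.induce B1).Connected)
    (c2 : (G.induce B2).Connected) (c3 : (G.induce B3).Connected)
    (e0 : ∃ u ∈ B0, ∃ v ∈ B1, G.Adj u v)
    (e1 : ∃ u ∈ B1, ∃ v ∈ B2, G.Adj u v)
    (e2 : ∃ u ∈ B2, ∃ v ∈ B3, G.Adj u v)
    (e3 : ∃ u ∈ B3, ∃ v ∈ B0, G.Adj u v) :
    ∃ (u : V) (c : G.Walk u u), c.IsCycle ∧ ∀ x ∈ c.support, x ∈ B0 ∪ B1 ∪ B2 ∪ B3 := by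
  obtain ⟨x0, hx0, y0, hy0, a0⟩ := e0
  obtain ⟨x1, hx1, y1, hy1, a1⟩ := e1
  obtain ⟨x2, hx2, y2, hy2, a2⟩ := e2
  obtain ⟨x3, hx3, y3, hy3, a3⟩ := e3
  obtain ⟨w1, hw1⟩ := walk_in_set c1 hy0 hx1
  obtain ⟨w2, hw2⟩ := walk_in_set c2 hy1 hx2
  obtain ⟨w3, hw3⟩ := walk_in_set c3 hy2 hx3
  obtain ⟨w0, hw0⟩ := walk_in_set c0 hy3 hx0
  set W : G.Walk y0 x0 :=
    w1.append (Walk.cons a1 (w2.append (Walk.cons a2 (w3.append (Walk.cons a3 w0))))) with hW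
  have hWs : ∀ x ∈ W.support, x ∈ B0 ∪ B1 ∪ B2 ∪ B3 := by
    intro x hx
    have m : x ∈ B0 ∨ x ∈ B1 ∨ x ∈ B2 ∨ x ∈ B3 := by
      simp only [hW, Walk.mem_support_append_iff, Walk.support_cons, List.mem_cons] at hx
      rcases hx with h | rfl | h | rfl | h | rfl | h
      · exact Or.inr (Or.inl (hw1 x h))
      · exact Or.inr (Or.inl hx1)
      · exact Or.inr (Or.inr (Or.inl (hw2 x h)))
      · exact Or.inr (Or.inr (Or.inl hx2))
      · exact Or.inr (Or.inr (Or.inr (hw3 x h)))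
      · exact Or.inr (Or.inr (Or.inr hx3))
      · exact Or.inl (hw0 x h)
    simp only [Set.mem_union, or_assoc]
    exact m
  have hedge : s(x0, y0) ∉ W.edges := by
    intro he
    simp only [hW, Walk.edges_append, Walk.edges_cons, List.mem_append, List.mem_cons] at he
    rcases he with h | h | h | h | h | h | h
    · exact Set.disjoint_left.mp d01 hx0 (hw1 _ (w1.fst_mem_support_of_mem_edges h))
    · rw [Sym2.eq_iff] at h
      rcases h with ⟨h, -⟩ | ⟨h, -⟩
      · exact Set.disjoint_left.mp d01 hx0 (h ▸ hx1)
      · exact Set.disjoint_left.mp d02 hx0 (h ▸ hy1)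
    · exact Set.disjoint_left.mp d02 hx0 (hw2 _ (w2.fst_mem_support_of_mem_edges h))
    · rw [Sym2.eq_iff] at h
      rcases h with ⟨h, -⟩ | ⟨h, -⟩
      · exact Set.disjoint_left.mp d02 hx0 (h ▸ hx2)
      · exact Set.disjoint_left.mp d03 hx0 (h ▸ hy2)
    · exact Set.disjoint_left.mp d03 hx0 (hw3 _ (w3.fst_mem_support_of_mem_edges h))
    · rw [Sym2.eq_iff] at h
      rcases h with ⟨h, -⟩ | ⟨h1, h2⟩
      · exact Set.disjoint_left.mp d03 hx0 (h ▸ hx3)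
      · exact Set.disjoint_left.mp d13 hy0 (h2 ▸ hx3)
    · exact Set.disjoint_left.mp d01 (hw0 _ (w0.snd_mem_support_of_mem_edges h)) hy0
  have hpe : ¬ s(x0, y0) ∈ (W.toPath : G.Walk y0 x0).edges := by
    intro h
    exact hedge (Walk.edges_bypass_subset W h)
  refine ⟨x0, Walk.cons a0 (W.toPath : G.Walk y0 x0), Path.cons_isCycle W.toPath a0 hpe, ?_⟩
  intro x hx
  rw [Walk.support_cons] at hx
  rcases List.mem_cons.mp hx with rfl | hx
  · simp only [Set.mem_union]
    exact Or.inl (Or.inl (Or.inl hx0))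
  · exact hWs x (Walk.support_bypass_subset W hx)

/-- In a graph with a "BFS potential" away from `s1`, every cycle passes through `s1`. -/
lemma cycle_meets (G : SimpleGraph V) (s1 : V) (μ : V → ℕ)
    (P1 : ∀ u w, G.Adj u w → u ≠ s1 → w ≠ s1 → μ u = μ w + 1 ∨ μ w = μ u + 1)
    (P2 : ∀ u w w', G.Adj u w → G.Adj u w' → u ≠ s1 → w ≠ s1 → w' ≠ s1 →
      μ w + 1 = μ u → μ w' + 1 = μ u → w = w')
    {v : V} (c : G.Walk v v) (hc : c.IsCycle) : s1 ∈ c.support := by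
  by_contra hs
  obtain ⟨u, hu, hmax⟩ := Finset.exists_max_image c.support.toFinset μ
    ⟨v, List.mem_toFinset.mpr c.start_mem_support⟩
  rw [List.mem_toFinset] at hu
  have hmax' : ∀ x ∈ c.support, μ x ≤ μ u := fun x hx => hmax x (List.mem_toFinset.mpr hx)
  obtain ⟨c', hcyc', hsup⟩ : ∃ c' : G.Walk u u, c'.IsCycle ∧ ∀ x ∈ c'.support, x ∈ c.support := by
    refine ⟨c.rotate u hu, hc.rotate hu, fun x hx => ?_⟩
    rw [Walk.support_eq_cons] at hx
    rcases List.mem_cons.mp hx with rfl | hx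
    · exact hu
    · exact List.mem_of_mem_tail ((Walk.support_rotate c u hu).mem_iff.mp hx)
  obtain ⟨w, hadj, q, rfl⟩ := Walk.not_nil_iff.mp hcyc'.not_nil
  rw [Walk.cons_isCycle_iff] at hcyc'
  obtain ⟨hqp, hqe⟩ := hcyc'
  obtain ⟨w2, hadj2, r, hrev⟩ := Walk.exists_eq_cons_of_ne hadj.ne q.reverse
  have hwmem : w ∈ c.support := hsup w (by
    rw [Walk.support_cons]; exact List.mem_cons_of_mem _ q.start_mem_support)
  have hw2mem : w2 ∈ c.support := by
    have h1 : w2 ∈ q.reverse.support := by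
      rw [hrev, Walk.support_cons]
      exact List.mem_cons_of_mem _ r.start_mem_support
    rw [Walk.support_reverse, List.mem_reverse] at h1
    exact hsup w2 (by rw [Walk.support_cons]; exact List.mem_cons_of_mem _ h1)
  have humem : u ∈ c.support := hsup u (Walk.start_mem_support _)
  have hus : u ≠ s1 := fun h => hs (h ▸ humem)
  have hws : w ≠ s1 := fun h => hs (h ▸ hwmem)
  have hw2s : w2 ≠ s1 := fun h => hs (h ▸ hw2mem)
  have h1 := P1 u w hadj hus hws
  have h2 := P1 u w2 hadj2 hus hw2s
  have hb1 := hmax' w hwmem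
  have hb2 := hmax' w2 hw2mem
  have mw : μ w + 1 = μ u := by omega
  have mw2 : μ w2 + 1 = μ u := by omega
  have hww2 : w = w2 := P2 u w w2 hadj hadj2 hus hws hw2s mw mw2
  subst hww2
  apply hqe
  have : s(u, w) ∈ q.reverse.edges := by
    rw [hrev, Walk.edges_cons]; exact List.mem_cons_self
  rwa [Walk.edges_reverse, List.mem_reverse] at this

lemma four_good {P : Fin 5 → Prop} (h : ∀ i j, ¬ P i → ¬ P j → i = j) :
    ∃ i0 i1 i2 i3 : Fin 5, P i0 ∧ P i1 ∧ P i2 ∧ P i3 ∧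
      i0 ≠ i1 ∧ i0 ≠ i2 ∧ i0 ≠ i3 ∧ i1 ≠ i2 ∧ i1 ≠ i3 ∧ i2 ≠ i3 := by
  have key : ∀ i j : Fin 5, i ≠ j → ¬ P i → P j := by
    intro i j hij hi
    by_contra hj
    exact hij (h i j hi hj)
  by_cases h0 : P 0
  · by_cases h1 : P 1
    · by_cases h2 : P 2
      · by_cases h3 : P 3
        · exact ⟨0, 1, 2, 3, h0, h1, h2, h3, by decide, by decide, by decide, by decide,
            by decide, by decide⟩
        · exact ⟨0, 1, 2, 4, h0, h1, h2, key 3 4 (by decide) h3, by decide, by decide,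
            by decide, by decide, by decide, by decide⟩
      · exact ⟨0, 1, 3, 4, h0, h1, key 2 3 (by decide) h2, key 2 4 (by decide) h2,
          by decide, by decide, by decide, by decide, by decide, by decide⟩
    · exact ⟨0, 2, 3, 4, h0, key 1 2 (by decide) h1, key 1 3 (by decide) h1,
        key 1 4 (by decide) h1, by decide, by decide, by decide, by decide, by decide, by decide⟩
  · exact ⟨1, 2, 3, 4, key 0 1 (by decide) h0, key 0 2 (by decide) h0, key 0 3 (by decide) h0,
      key 0 4 (by decide) h0, by decide, by decide, by decide, by decide, by decide, by decide⟩

lemma two_good {P : Fin 3 → Prop} (h : ∀ i j, ¬ P i → ¬ P j → i = j) :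
    ∃ i j : Fin 3, i ≠ j ∧ P i ∧ P j := by
  have key : ∀ i j : Fin 3, i ≠ j → ¬ P i → P j := by
    intro i j hij hi
    by_contra hj
    exact hij (h i j hi hj)
  by_cases h0 : P 0
  · by_cases h1 : P 1
    · exact ⟨0, 1, by decide, h0, h1⟩
    · exact ⟨0, 2, by decide, h0, key 1 2 (by decide) h1⟩
  · exact ⟨1, 2, by decide, key 0 1 (by decide) h0, key 0 2 (by decide) h0⟩

end General

section Concrete

def elist : List (Fin 14 × Fin 14) :=
  [(0,2),(0,3),(0,4),(2,3),(3,4),(4,1),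
   (0,5),(0,6),(0,7),(5,6),(6,7),(7,1),
   (0,8),(0,9),(0,10),(8,9),(9,10),(10,1),
   (11,12),(12,13),(0,11),(13,1)]

def adjFun (u v : Fin 14) : Bool := decide ((u,v) ∈ elist) || decide ((v,u) ∈ elist)

lemma adjFun_symm : ∀ u v, adjFun u v = true → adjFun v u = true := by decide
lemma adjFun_irrefl : ∀ u, ¬ adjFun u u = true := by decide

def myG : SimpleGraph (Fin 14) :=
  ⟨fun u v => adjFun u v = true, ⟨fun u v h => adjFun_symm u v h⟩, ⟨fun u h => adjFun_irrefl u h⟩⟩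

instance : DecidableRel myG.Adj := fun u v => inferInstanceAs (Decidable (adjFun u v = true))

def lab : Fin 14 → ℕ := ![0,0,1,1,1,2,2,2,3,3,3,4,4,4]

def compF : ℕ → Finset (Fin 14)
  | 1 => {2,3,4}
  | 2 => {5,6,7}
  | 3 => {8,9,10}
  | 4 => {11,12,13}
  | _ => ∅

lemma compF_card : ∀ n, (compF n).card ≤ 3 := by
  intro n
  match n with
  | 0 => decide
  | 1 => decide
  | 2 => decide
  | 3 => decide
  | 4 => decide
  | (n+5) => simp [compF]

lemma label_aux : ∀ l : List ℕ, l.Chain' (fun a b => a = 0 ∨ b = 0 ∨ a = b) →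
    ((l.filter (fun a => a ≠ 0)).toFinset.card ≤
      l.count 0 + (if l.head? = some 0 then 0 else 1)) := by
  intro l
  induction l with
  | nil => simp
  | cons a t ih =>
    intro hch
    have iht := ih hch.tail
    by_cases ha : a = 0
    · subst ha
      have hf : (0 :: t).filter (fun a => a ≠ 0) = t.filter (fun a => a ≠ 0) := by simp
      have hc : (0 :: t).count 0 = t.count 0 + 1 := by
        simp [List.count_cons]
      rw [hf, hc]
      simp only [List.head?_cons, if_pos rfl]
      split_ifs at iht <;> omega
    · have hf : (a :: t).filter (fun x => x ≠ 0) = a :: t.filter (fun x => x ≠ 0) := by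
        simp [ha]
      have hc : (a :: t).count 0 = t.count 0 := by
        rw [List.count_cons]
        simp [ha]
      rw [hf, hc]
      simp only [List.head?_cons]
      simp only [Option.some.injEq, ha, ↓reduceIte]
      cases t with
      | nil => simp
      | cons b t' =>
        have hab : a = 0 ∨ b = 0 ∨ a = b := (List.isChain_cons_cons.mp hch).1
        rcases hab with hab | hb | hab
        · exact absurd hab ha
        · subst hb
          rw [List.head?_cons, if_pos rfl] at iht
          calc (List.toFinset (a :: List.filter (fun x => decide (x ≠ 0)) (0 :: t'))).card
              ≤ (List.filter (fun x => decide (x ≠ 0)) (0 :: t')).toFinset.card + 1 := by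
                rw [List.toFinset_cons]; exact Finset.card_insert_le _ _
            _ ≤ (0 :: t').count 0 + 1 := by omega
        · subst hab
          have hmem : a ∈ (List.filter (fun x => decide (x ≠ 0)) (a :: t')) := by
            apply List.mem_filter.mpr
            exact ⟨List.mem_cons_self, by simp [ha]⟩
          have : (List.toFinset (a :: List.filter (fun x => decide (x ≠ 0)) (a :: t'))) =
              (List.filter (fun x => decide (x ≠ 0)) (a :: t')).toFinset := by
            rw [List.toFinset_cons]
            exact Finset.insert_eq_self.mpr (List.mem_toFinset.mpr hmem)
          rw [this]
          simp only [List.head?_cons] at iht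
          simp only [Option.some.injEq, ha, ↓reduceIte] at iht
          exact iht

lemma lab_adj : ∀ u v : Fin 14, myG.Adj u v → lab u = 0 ∨ lab v = 0 ∨ lab u = lab v := by
  decide

lemma lab_zero : ∀ v : Fin 14, lab v = 0 → v ∈ ({0, 1} : Finset (Fin 14)) := by decide

lemma lab_comp : ∀ v : Fin 14, lab v ≠ 0 → v ∈ compF (lab v) := by decide

lemma length_le_ten {a b : Fin 14} (Q : myG.Walk a b) (hQ : Q.IsPath) : Q.length ≤ 10 := by
  have hnd : Q.support.Nodup := hQ.support_nodup
  set l := Q.support.map lab with hl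
  have hch : List.Chain' (fun x y : ℕ => x = 0 ∨ y = 0 ∨ x = y) l :=
    List.isChain_map_of_isChain lab (fun x y h => lab_adj x y h) Q.isChain_adj_support
  have h1 := label_aux l hch
  have h1' : (l.filter (fun a => a ≠ 0)).toFinset.card ≤ l.count 0 + 1 := by
    split_ifs at h1 <;> omega
  -- bound on count of zeros
  have hz : l.count 0 ≤ 2 := by
    have : l.count 0 = (Q.support.filter (fun v => lab v = 0)).length := by
      rw [hl, List.count, List.countP_map]
      rw [List.countP_eq_length_filter]
      congr 1
    rw [this]
    have hnodup : (Q.support.filter (fun v => lab v = 0)).Nodup := hnd.filter _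
    rw [← List.toFinset_card_of_nodup hnodup]
    have hsub : (Q.support.filter (fun v => lab v = 0)).toFinset ⊆ ({0,1} : Finset (Fin 14)) := by
      intro v hv
      rw [List.mem_toFinset, List.mem_filter] at hv
      exact lab_zero v (by simpa using hv.2)
    calc _ ≤ ({0,1} : Finset (Fin 14)).card := Finset.card_le_card hsub
      _ ≤ 2 := by decide
  set N := (l.filter (fun a => a ≠ 0)).toFinset with hN
  have hsub : Q.support.toFinset ⊆ ({0, 1} : Finset (Fin 14)) ∪ N.biUnion compF := by
    intro v hv
    rw [List.mem_toFinset] at hv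
    by_cases h0 : lab v = 0
    · exact Finset.mem_union_left _ (lab_zero v h0)
    · apply Finset.mem_union_right
      apply Finset.mem_biUnion.mpr
      refine ⟨lab v, ?_, lab_comp v h0⟩
      rw [hN, List.mem_toFinset, List.mem_filter]
      exact ⟨List.mem_map.mpr ⟨v, hv, rfl⟩, by simp [h0]⟩
  have hlen : Q.support.length ≤ 11 := by
    rw [← List.toFinset_card_of_nodup hnd]
    calc Q.support.toFinset.card
        ≤ (({0, 1} : Finset (Fin 14)) ∪ N.biUnion compF).card := Finset.card_le_card hsub
      _ ≤ ({0, 1} : Finset (Fin 14)).card + (N.biUnion compF).card := Finset.card_union_le _ _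
      _ ≤ 2 + ∑ i ∈ N, (compF i).card := by
          have := Finset.card_biUnion_le (s := N) (t := compF)
          have h2 : ({0, 1} : Finset (Fin 14)).card = 2 := by decide
          omega
      _ ≤ 2 + N.card * 3 := by
          have := Finset.sum_le_card_nsmul N (fun i => (compF i).card) 3
            (fun x _ => compF_card x)
          simp only [smul_eq_mul] at this
          omega
      _ ≤ 11 := by
          have hNl : N.card ≤ 3 := by omega
          omega
  have := Q.length_support
  omega

end Concrete

section Walks

open SimpleGraph.Walk

/-- The longest path: 4-3-2-0-5-6-7-1-10-9-8. -/
def Pwalk : myG.Walk 4 8 :=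
  Walk.cons (show myG.Adj 4 3 by decide) (Walk.cons (show myG.Adj 3 2 by decide) (Walk.cons (show myG.Adj 2 0 by decide) (Walk.cons (show myG.Adj 0 5 by decide) (Walk.cons (show myG.Adj 5 6 by decide) (Walk.cons (show myG.Adj 6 7 by decide) (Walk.cons (show myG.Adj 7 1 by decide) (Walk.cons (show myG.Adj 1 10 by decide) (Walk.cons (show myG.Adj 10 9 by decide) (Walk.cons (show myG.Adj 9 8 by decide) (Walk.nil))))))))))

/-- dominating -/
def Qwalk : myG.Walk 2 7 :=
  Walk.cons (show myG.Adj 2 3 by decide) (Walk.cons (show myG.Adj 3 4 by decide) (Walk.cons (show myG.Adj 4 1 by decide) (Walk.cons (show myG.Adj 1 13 by decide) (Walk.cons (show myG.Adj 13 12 by decide) (Walk.cons (show myG.Adj 12 11 by decide) (Walk.cons (show myG.Adj 11 0 by decide) (Walk.cons (show myG.Adj 0 5 by decide) (Walk.cons (show myG.Adj 5 6 by decide) (Walk.cons (show myG.Adj 6 7 by decide) (Walk.nil))))))))))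

end Walks

def μfun : Fin 14 → ℕ := ![99,0,3,2,1,3,2,1,3,2,1,3,2,1]

lemma P1fact : ∀ u w : Fin 14, myG.Adj u w → u ≠ 0 → w ≠ 0 →
    μfun u = μfun w + 1 ∨ μfun w = μfun u + 1 := by decide

lemma P2fact : ∀ u w w' : Fin 14, myG.Adj u w → myG.Adj u w' → u ≠ 0 → w ≠ 0 → w' ≠ 0 →
    μfun w + 1 = μfun u → μfun w' + 1 = μfun u → w = w' := by decide

lemma noC4config {B0 B1 B2 B3 : Set (Fin 14)}
    (h0 : (0 : Fin 14) ∉ B0) (h1 : (0 : Fin 14) ∉ B1)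
    (h2 : (0 : Fin 14) ∉ B2) (h3 : (0 : Fin 14) ∉ B3)
    (d01 : Disjoint B0 B1) (d02 : Disjoint B0 B2) (d03 : Disjoint B0 B3)
    (d12 : Disjoint B1 B2) (d13 : Disjoint B1 B3) (d23 : Disjoint B2 B3)
    (c0 : (myG.induce B0).Connected) (c1 : (myG.induce B1).Connected)
    (c2 : (myG.induce B2).Connected) (c3 : (myG.induce B3).Connected)
    (e0 : ∃ u ∈ B0, ∃ v ∈ B1, myG.Adj u v)
    (e1 : ∃ u ∈ B1, ∃ v ∈ B2, myG.Adj u v)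
    (e2 : ∃ u ∈ B2, ∃ v ∈ B3, myG.Adj u v)
    (e3 : ∃ u ∈ B3, ∃ v ∈ B0, myG.Adj u v) : False := by
  obtain ⟨u, c, hcyc, hsup⟩ :=
    cycle_of_sets d01 d02 d03 d12 d13 d23 c0 c1 c2 c3 e0 e1 e2 e3
  have hmem : (0 : Fin 14) ∈ c.support := cycle_meets myG 0 μfun P1fact P2fact c hcyc
  have := hsup 0 hmem
  simp only [Set.mem_union] at this
  tauto

lemma noK5 : ¬ IsMinorOf (completeGraph (Fin 5)) myG := by
  rintro ⟨f, hne, hconn, hdisj, hadj⟩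
  have hbad : ∀ i j : Fin 5, ¬ ((0 : Fin 14) ∉ f i) → ¬ ((0 : Fin 14) ∉ f j) → i = j := by
    intro i j hi hj
    by_contra hij
    exact Set.disjoint_left.mp (hdisj hij) (not_not.mp hi) (not_not.mp hj)
  obtain ⟨i0, i1, i2, i3, p0, p1, p2, p3, n01, n02, n03, n12, n13, n23⟩ := four_good hbad
  have hAdj : ∀ a b : Fin 5, a ≠ b → (completeGraph (Fin 5)).Adj a b := fun a b h => h
  exact noC4config p0 p1 p2 p3
    (hdisj n01) (hdisj n02) (hdisj n03) (hdisj n12) (hdisj n13) (hdisj n23)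
    (hconn i0) (hconn i1) (hconn i2) (hconn i3)
    (hadj (hAdj _ _ n01)) (hadj (hAdj _ _ n12)) (hadj (hAdj _ _ n23))
    (hadj (hAdj _ _ n03.symm))

lemma noK33 : ¬ IsMinorOf (completeBipartiteGraph (Fin 3) (Fin 3)) myG := by
  rintro ⟨f, hne, hconn, hdisj, hadj⟩
  have hbad : ∀ i j : Fin 3 ⊕ Fin 3, (0 : Fin 14) ∈ f i → (0 : Fin 14) ∈ f j → i = j := by
    intro i j hi hj
    by_contra hij
    exact Set.disjoint_left.mp (hdisj hij) hi hj
  obtain ⟨aL, bL, hLne, haL, hbL⟩ := two_good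
    (P := fun i => (0 : Fin 14) ∉ f (Sum.inl i))
    (fun i j hi hj => Sum.inl_injective (hbad _ _ (not_not.mp hi) (not_not.mp hj)))
  obtain ⟨aR, bR, hRne, haR, hbR⟩ := two_good
    (P := fun i => (0 : Fin 14) ∉ f (Sum.inr i))
    (fun i j hi hj => Sum.inr_injective (hbad _ _ (not_not.mp hi) (not_not.mp hj)))
  have hAdjLR : ∀ (a b : Fin 3), (completeBipartiteGraph (Fin 3) (Fin 3)).Adj
      (Sum.inl a) (Sum.inr b) := by
    intro a b
    simp [completeBipartiteGraph]
  have hAdjRL : ∀ (a b : Fin 3), (completeBipartiteGraph (Fin 3) (Fin 3)).Adj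
      (Sum.inr a) (Sum.inl b) := by
    intro a b
    simp [completeBipartiteGraph]
  exact noC4config haL haR hbL hbR
    (hdisj (by simp)) (hdisj (by simp [hLne])) (hdisj (by simp))
    (hdisj (by simp)) (hdisj (by simp [hRne])) (hdisj (by simp))
    (hconn _) (hconn _) (hconn _) (hconn _)
    (hadj (hAdjLR aL aR)) (hadj (hAdjRL aR bL)) (hadj (hAdjLR bL bR))
    (hadj (hAdjRL bR aL))

lemma conn_compl (S : Finset (Fin 14)) (hub : Fin 14) (hhub : hub ∉ S) (ρ : Fin 14 → ℕ)
    (h : ∀ v, v ∉ S → v ≠ hub → ∃ u, u ∉ S ∧ myG.Adj v u ∧ ρ u < ρ v) :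
    (myG.induce ((↑S : Set (Fin 14))ᶜ)).Connected := by
  apply connected_induce_of_rho myG _ hub (by simpa using hhub) ρ
  intro v hv hvh
  obtain ⟨u, hu, h1, h2⟩ := h v (by simpa using hv) hvh
  exact ⟨u, by simpa using hu, h1, h2⟩

lemma myG_conn : myG.Connected := by
  apply connected_of_rho myG 0 ![0,2,1,1,1,1,1,1,1,1,1,1,2,3]
  decide

theorem stmt19_aux :
    ∃ (n : ℕ) (G : SimpleGraph (Fin n)),
      IsPlanar G ∧ KConnected 2 G ∧
      ∃ (a b : Fin n) (P : G.Walk a b), IsLongestPath G P ∧ pe G < eccW G P := by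
  refine ⟨14, myG, ⟨noK5, noK33⟩, ⟨by decide, ?_⟩, 4, 8, Pwalk, ?_, ?_⟩
  · -- 2-connectedness
    intro S hS
    rcases S.eq_empty_or_nonempty with rfl | hSne
    · exact conn_compl ∅ 0 (by decide) ![0,2,1,1,1,1,1,1,1,1,1,1,2,3] (by decide)
    · have hc1 : S.card = 1 := by
        have := Finset.card_pos.mpr hSne
        omega
      obtain ⟨r, rfl⟩ := Finset.card_eq_one.mp hc1
      fin_cases r
      case _ => exact conn_compl _ 1 (by decide) ![9,0,3,2,1,3,2,1,3,2,1,3,2,1] (by decide)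
      all_goals first
        | exact conn_compl _ 0 (by decide) ![0,2,1,1,1,1,1,1,1,1,1,1,2,3] (by decide)
        | exact conn_compl _ 0 (by decide) ![0,2,1,1,1,1,1,1,1,1,1,9,4,3] (by decide)
  · -- longest path
    refine ⟨by rw [Walk.isPath_def]; decide, fun c d Q hQ => ?_⟩
    have h1 := length_le_ten Q hQ
    have h2 : Pwalk.length = 10 := rfl
    omega
  · -- pe < eccW
    have hQp : Qwalk.IsPath := by rw [Walk.isPath_def]; decide
    have hpe : pe myG ≤ 1 := by
      refine le_trans (Nat.sInf_le ⟨2, 7, Qwalk, hQp, rfl⟩) ?_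
      apply Finset.sup_le
      intro u _
      by_cases hu : u ∈ Qwalk.support
      · refine le_trans (Finset.inf'_le _ (List.mem_toFinset.mpr hu)) ?_
        rw [SimpleGraph.dist_self]
        omega
      · have hadj : myG.Adj u 0 := by
          have hfact : ∀ u : Fin 14, u ∈ Qwalk.support ∨ myG.Adj u 0 := by decide
          exact (hfact u).resolve_left hu
        have h0mem : (0 : Fin 14) ∈ Qwalk.support := by decide
        refine le_trans (Finset.inf'_le _ (List.mem_toFinset.mpr h0mem)) ?_
        simpa using SimpleGraph.dist_le hadj.toWalk
    have hP2 : 2 ≤ eccW myG Pwalk := by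
      refine le_trans ?_ (Finset.le_sup (Finset.mem_univ (12 : Fin 14)))
      apply Finset.le_inf'
      intro t ht
      rw [List.mem_toFinset] at ht
      have hre : myG.Reachable 12 t := myG_conn.preconnected 12 t
      have hfact : ∀ t : Fin 14, t ∈ Pwalk.support →
          (12 : Fin 14) ≠ t ∧ ¬ myG.Adj 12 t := by decide
      obtain ⟨hne, hnadj⟩ := hfact t ht
      have hpos : 0 < myG.dist 12 t := hre.pos_dist_of_ne hne
      have hone : myG.dist 12 t ≠ 1 := fun h => hnadj (SimpleGraph.dist_eq_one_iff_adj.mp h)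
      omega
    calc pe myG ≤ 1 := hpe
      _ < 2 := by omega
      _ ≤ eccW myG Pwalk := hP2

theorem stmt19 :
    ∃ (n : ℕ) (G : SimpleGraph (Fin n)),
      IsPlanar G ∧ KConnected 2 G ∧
      ∃ (a b : Fin n) (P : G.Walk a b), IsLongestPath G P ∧ pe G < eccW G P := stmt19_aux
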